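/- For every fixed integer m ≥ 1, the sequence (ξ_{n,m})_{n ≥ 2} converges to 1 as n → ∞. -/

import Mathlib

open Finset Filter Topology

/-- A code `(v 0, …, v (m-1))` is *uniquely decodable* if any two nonempty sequences of
indices whose corresponding concatenations of code words coincide are equal. -/
def IsUDCode {X : Type*} {m : ℕ} (v : Fin m → List X) : Prop :=
  ∀ s t : List (Fin m), s ≠ [] → t ≠ [] →
    (s.map v).flatten = (t.map v).flatten → s = t

/-- A *prefix code*: an injective sequence of nonempty words where no code word
is a prefix of another. -/
def IsPrefixCode {X : Type*} {m : ℕ} (v : Fin m → List X) : Prop :=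
  Function.Injective v ∧ (∀ i, v i ≠ []) ∧ ∀ i j, i ≠ j → ¬ v i <+: v j

/-- The set of uniquely decodable codes over an `n`-letter alphabet with
length distribution `L`. -/
def UD (n : ℕ) {m : ℕ} (L : Fin m → ℕ) : Set (Fin m → List (Fin n)) :=
  {v | (∀ i, (v i).length = L i) ∧ IsUDCode v}

/-- The set of prefix codes over an `n`-letter alphabet with length distribution `L`. -/
def PR (n : ℕ) {m : ℕ} (L : Fin m → ℕ) : Set (Fin m → List (Fin n)) :=
  {v | (∀ i, (v i).length = L i) ∧ IsPrefixCode v}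

/-- `ρ_{n,L} = |PR_n(L)| / |UD_n(L)|`. -/
noncomputable def rho (n : ℕ) {m : ℕ} (L : Fin m → ℕ) : ℝ :=
  ((PR n L).ncard : ℝ) / ((UD n L).ncard : ℝ)

/-- `ξ_{n,m} = inf_{L ∈ ℒ_{n,m}} ρ_{n,L}`. -/
noncomputable def xi (n m : ℕ) : ℝ :=
  sInf {r : ℝ | ∃ L : Fin m → ℕ, (∀ i, 1 ≤ L i) ∧ (UD n L).Nonempty ∧ r = rho n L}

/-- `ς_{n,m} = (n - (m mod (n-1))) / n^{⌊m/(n-1)⌋ + 1}`. -/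
noncomputable def varsigma (n m : ℕ) : ℝ :=
  ((n : ℝ) - (m % (n - 1) : ℕ)) / (n : ℝ) ^ (m / (n - 1) + 1)

/-- `q_{n,m}`: `1` if `n ≥ m`, and `(m-1)!/(m-1)^{m-1}` if `n < m`. -/
noncomputable def qnm (n m : ℕ) : ℝ :=
  if m ≤ n then 1 else (Nat.factorial (m - 1) : ℝ) / ((m - 1 : ℕ) : ℝ) ^ (m - 1)

/-- `ϖ_{n,m} = ∏_{i=1}^{m-1} (1 - (1 - n^{-i})/(n-1))`. -/
noncomputable def varpi (n m : ℕ) : ℝ :=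
  ∏ i ∈ Finset.Icc 1 (m - 1), (1 - (1 - 1 / (n : ℝ) ^ i) / ((n : ℝ) - 1))

/-- `η_{n,m} = 1 + Σ_{i=1}^{m-1} C(m-1,i)/(n^i - 1)`. -/
noncomputable def eta (n m : ℕ) : ℝ :=
  1 + ∑ i ∈ Finset.Icc 1 (m - 1), ((m - 1).choose i : ℝ) / ((n : ℝ) ^ i - 1)

section Aux

variable {X : Type*}

theorem isUD_of_isPrefix {m : ℕ} {v : Fin m → List X} (h : IsPrefixCode v) : IsUDCode v := by
  obtain ⟨hinj, hne, hpre⟩ := h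
  have key : ∀ s t : List (Fin m), (s.map v).flatten = (t.map v).flatten → s = t := by
    intro s
    induction s with
    | nil =>
      intro t ht
      cases t with
      | nil => rfl
      | cons b t' =>
        exfalso
        simp only [List.map_nil, List.flatten_nil, List.map_cons, List.flatten_cons] at ht
        exact hne b (List.append_eq_nil_iff.mp ht.symm).1
    | cons a s' ih =>
      intro t ht
      cases t with
      | nil =>
        exfalso
        simp only [List.map_nil, List.flatten_nil, List.map_cons, List.flatten_cons] at ht
        exact hne a (List.append_eq_nil_iff.mp ht).1
      | cons b t' =>
        simp only [List.map_cons, List.flatten_cons] at ht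
        have hab : a = b := by
          rcases List.prefix_or_prefix_of_prefix (l₃ := v b ++ (t'.map v).flatten)
            ⟨_, ht⟩ (List.prefix_append _ _) with h1 | h1
          · by_contra hne'; exact hpre a b hne' h1
          · by_contra hne'; exact hpre b a (Ne.symm hne') h1
        subst hab
        exact congrArg (List.cons a) (ih t' (List.append_cancel_left ht))
  exact fun s t _ _ => key s t

/-- The finset of words of length `a` over `Fin n`. -/
def words (n a : ℕ) : Finset (List (Fin n)) :=
  (Finset.univ : Finset (Fin a → Fin n)).image List.ofFn

theorem mem_words {n a : ℕ} {l : List (Fin n)} : l ∈ words n a ↔ l.length = a := by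
  simp only [words, mem_image, mem_univ, true_and]
  constructor
  · rintro ⟨f, rfl⟩; simp
  · rintro rfl; exact ⟨l.get, List.ofFn_get l⟩

theorem card_words (n a : ℕ) : (words n a).card = n ^ a := by
  rw [words, Finset.card_image_of_injective _ List.ofFn_injective]
  simp [Fintype.card_fun]

/-- All codes with length distribution `L`. -/
def codesF (n : ℕ) {m : ℕ} (L : Fin m → ℕ) : Finset (Fin m → List (Fin n)) :=
  Fintype.piFinset fun i => words n (L i)

theorem card_codesF (n : ℕ) {m : ℕ} (L : Fin m → ℕ) :
    (codesF n L).card = ∏ i, n ^ L i := by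
  simp [codesF, Fintype.card_piFinset, card_words]

theorem mem_codesF {n : ℕ} {m : ℕ} {L : Fin m → ℕ} {v : Fin m → List (Fin n)} :
    v ∈ codesF n L ↔ ∀ i, (v i).length = L i := by
  simp [codesF, Fintype.mem_piFinset, mem_words]

/-- Codes where `v i` is a prefix of `v j`. -/
def badF (n : ℕ) {m : ℕ} (L : Fin m → ℕ) (i j : Fin m) : Finset (Fin m → List (Fin n)) :=
  (codesF n L).filter fun v => v i <+: v j

theorem card_badF_mul {n m : ℕ} {L : Fin m → ℕ} (hn : 1 ≤ n) (hL : ∀ i, 1 ≤ L i)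
    {i j : Fin m} (hij : i ≠ j) :
    n * (badF n L i j).card ≤ (codesF n L).card := by
  classical
  set T : Finset (Fin m → List (Fin n)) :=
    Fintype.piFinset fun k => if k = i then ({[]} : Finset (List (Fin n))) else words n (L k)
  have hmaps : ∀ v ∈ badF n L i j, Function.update v i ([] : List (Fin n)) ∈ T := by
    intro v hv
    rw [badF, mem_filter] at hv
    simp only [T, Fintype.mem_piFinset]
    intro k
    by_cases hk : k = i
    · subst hk; simp [Function.update]
    · simp only [if_neg hk, Function.update_of_ne hk]
      exact mem_words.mpr (mem_codesF.mp hv.1 k)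
  have hinj : Set.InjOn (fun v => Function.update v i ([] : List (Fin n))) (↑(badF n L i j) : Set (Fin m → List (Fin n))) := by
    intro v hv w hw h
    rw [Finset.mem_coe, badF, mem_filter] at hv hw
    have hvj : v j = w j := by
      have := congrFun h j
      simpa [Function.update_of_ne (Ne.symm hij)] using this
    have hlen : (v i).length = (w i).length := by
      rw [mem_codesF.mp hv.1 i, mem_codesF.mp hw.1 i]
    funext k
    by_cases hk : k = i
    · subst hk
      rw [List.prefix_iff_eq_take.mp hv.2, List.prefix_iff_eq_take.mp hw.2, hvj, hlen]
    · have := congrFun h k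
      simpa [Function.update_of_ne hk] using this
  have h1 : (badF n L i j).card ≤ T.card :=
    Finset.card_le_card_of_injOn _ hmaps hinj
  have hT : T.card = ∏ k ∈ Finset.univ.erase i, (words n (L k)).card := by
    rw [Fintype.card_piFinset]
    rw [← Finset.mul_prod_erase Finset.univ _ (Finset.mem_univ i)]
    rw [if_pos rfl, Finset.card_singleton, one_mul]
    exact Finset.prod_congr rfl fun k hk => by
      rw [if_neg (Finset.ne_of_mem_erase hk)]
  have hC : (codesF n L).card = (words n (L i)).card * ∏ k ∈ Finset.univ.erase i, (words n (L k)).card := by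
    rw [codesF, Fintype.card_piFinset, ← Finset.mul_prod_erase Finset.univ _ (Finset.mem_univ i)]
  calc n * (badF n L i j).card ≤ n * T.card := Nat.mul_le_mul_left _ h1
    _ = n * ∏ k ∈ Finset.univ.erase i, (words n (L k)).card := by rw [hT]
    _ ≤ (words n (L i)).card * ∏ k ∈ Finset.univ.erase i, (words n (L k)).card := by
        apply Nat.mul_le_mul_right
        rw [card_words]
        calc n = n ^ 1 := (pow_one n).symm
          _ ≤ n ^ L i := Nat.pow_le_pow_right hn (hL i)
    _ = (codesF n L).card := hC.symm

/-- Prefix codes as a finset. -/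
def prF (n : ℕ) {m : ℕ} (L : Fin m → ℕ) : Finset (Fin m → List (Fin n)) :=
  (codesF n L).filter fun v => ∀ i j, i ≠ j → ¬ v i <+: v j

theorem card_prF_lower {n m : ℕ} {L : Fin m → ℕ} (hn : 1 ≤ n) (hL : ∀ i, 1 ≤ L i) :
    n * (codesF n L).card ≤ n * (prF n L).card + m * m * (codesF n L).card := by
  classical
  have hsplit : (prF n L).card +
      ((codesF n L).filter fun v => ¬ ∀ i j, i ≠ j → ¬ v i <+: v j).card = (codesF n L).card :=
    Finset.card_filter_add_card_filter_not _
  have hsub : ((codesF n L).filter fun v => ¬ ∀ i j, i ≠ j → ¬ v i <+: v j) ⊆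
      (Finset.univ : Finset (Fin m)).offDiag.biUnion fun p => badF n L p.1 p.2 := by
    intro v hv
    rw [mem_filter] at hv
    obtain ⟨hvc, hex⟩ := hv
    push_neg at hex
    obtain ⟨i, j, hij, hpre⟩ := hex
    refine Finset.mem_biUnion.mpr ⟨(i, j), ?_, ?_⟩
    · simp [Finset.mem_offDiag, hij]
    · rw [badF, mem_filter]; exact ⟨hvc, hpre⟩
  have h2 : ((codesF n L).filter fun v => ¬ ∀ i j, i ≠ j → ¬ v i <+: v j).card ≤
      ∑ p ∈ (Finset.univ : Finset (Fin m)).offDiag, (badF n L p.1 p.2).card :=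
    le_trans (Finset.card_le_card hsub) (Finset.card_biUnion_le)
  have h3 : n * ∑ p ∈ (Finset.univ : Finset (Fin m)).offDiag, (badF n L p.1 p.2).card ≤
      m * m * (codesF n L).card := by
    rw [Finset.mul_sum]
    calc ∑ p ∈ (Finset.univ : Finset (Fin m)).offDiag, n * (badF n L p.1 p.2).card
        ≤ ∑ _p ∈ (Finset.univ : Finset (Fin m)).offDiag, (codesF n L).card := by
          apply Finset.sum_le_sum
          intro p hp
          exact card_badF_mul hn hL (Finset.mem_offDiag.mp hp).2.2
      _ = (Finset.univ : Finset (Fin m)).offDiag.card * (codesF n L).card := by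
          rw [Finset.sum_const, smul_eq_mul]
      _ ≤ m * m * (codesF n L).card := by
          have hcard : (Finset.univ : Finset (Fin m)).offDiag.card ≤ m * m := by
            have h4 : (Finset.univ : Finset (Fin m)).offDiag ⊆ Finset.univ ×ˢ Finset.univ :=
              fun p _ => Finset.mem_product.mpr ⟨Finset.mem_univ _, Finset.mem_univ _⟩
            have h5 := Finset.card_le_card h4
            rwa [Finset.card_product, Finset.card_univ, Fintype.card_fin] at h5
          exact Nat.mul_le_mul_right _ hcard
  calc n * (codesF n L).card
      = n * (prF n L).card + n * ((codesF n L).filter fun v => ¬ ∀ i j, i ≠ j → ¬ v i <+: v j).card := by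
        rw [← Nat.mul_add, hsplit]
    _ ≤ n * (prF n L).card + m * m * (codesF n L).card := by
        refine Nat.add_le_add_left (le_trans (Nat.mul_le_mul_left _ h2) h3) _

theorem PR_eq_coe {n m : ℕ} {L : Fin m → ℕ} (hL : ∀ i, 1 ≤ L i) :
    PR n L = ↑(prF n L) := by
  classical
  ext v
  simp only [PR, Set.mem_setOf_eq, prF, Finset.coe_filter, IsPrefixCode, mem_codesF]
  constructor
  · rintro ⟨hlen, _, _, hpre⟩; exact ⟨hlen, hpre⟩
  · rintro ⟨hlen, hpre⟩
    refine ⟨hlen, ?_, ?_, hpre⟩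
    · intro i j hvij
      by_contra hij
      exact hpre i j hij (hvij ▸ List.prefix_refl _)
    · intro i hi
      have := hlen i
      rw [hi] at this
      simp only [List.length_nil] at this
      have := hL i
      omega

theorem UD_subset_codes {n m : ℕ} {L : Fin m → ℕ} : UD n L ⊆ ↑(codesF n L) := by
  intro v hv
  rw [Finset.mem_coe, mem_codesF]
  exact hv.1

theorem PR_subset_UD {n m : ℕ} {L : Fin m → ℕ} : PR n L ⊆ UD n L := by
  rintro v ⟨hlen, hpc⟩
  exact ⟨hlen, isUD_of_isPrefix hpc⟩

theorem UD_finite {n m : ℕ} {L : Fin m → ℕ} : (UD n L).Finite :=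
  Set.Finite.subset (codesF n L).finite_toSet UD_subset_codes

theorem rho_le_one {n m : ℕ} {L : Fin m → ℕ} (hUD : (UD n L).Nonempty) : rho n L ≤ 1 := by
  rw [rho, div_le_one]
  · exact_mod_cast Set.ncard_le_ncard PR_subset_UD UD_finite
  · exact_mod_cast (Set.ncard_pos UD_finite).mpr hUD

theorem rho_lower {n m : ℕ} {L : Fin m → ℕ} (hn : 1 ≤ n) (hL : ∀ i, 1 ≤ L i)
    (hUD : (UD n L).Nonempty) : 1 - (m * m : ℝ) / n ≤ rho n L := by
  have hN0 : 0 < (codesF n L).card := by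
    rw [card_codesF]
    exact Finset.prod_pos fun i _ => Nat.pow_pos hn
  have hU0 : 0 < (UD n L).ncard := (Set.ncard_pos UD_finite).mpr hUD
  have hUN : (UD n L).ncard ≤ (codesF n L).card := by
    rw [← Set.ncard_coe_finset (codesF n L)]
    exact Set.ncard_le_ncard UD_subset_codes (codesF n L).finite_toSet
  have hA : (PR n L).ncard = (prF n L).card := by
    rw [PR_eq_coe hL, Set.ncard_coe_finset]
  have hkey : (n : ℝ) * ((codesF n L).card : ℝ) ≤
      (n : ℝ) * ((prF n L).card : ℝ) + (m : ℝ) * (m : ℝ) * ((codesF n L).card : ℝ) := by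
    exact_mod_cast card_prF_lower hn hL
  have hN0' : (0 : ℝ) < ((codesF n L).card : ℝ) := by exact_mod_cast hN0
  have hU0' : (0 : ℝ) < ((UD n L).ncard : ℝ) := by exact_mod_cast hU0
  have hUN' : ((UD n L).ncard : ℝ) ≤ ((codesF n L).card : ℝ) := by exact_mod_cast hUN
  have hn0' : (0 : ℝ) < (n : ℝ) := by exact_mod_cast hn
  have hA0 : (0 : ℝ) ≤ ((prF n L).card : ℝ) := Nat.cast_nonneg _
  have step1 : 1 - (m * m : ℝ) / n ≤ ((prF n L).card : ℝ) / ((codesF n L).card : ℝ) := by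
    rw [le_div_iff₀ hN0']
    have h1 : (1 - (m * m : ℝ) / n) * ((codesF n L).card : ℝ) * n =
        (n : ℝ) * ((codesF n L).card : ℝ) - (m : ℝ) * (m : ℝ) * ((codesF n L).card : ℝ) := by
      field_simp
    have h2 : (1 - (m * m : ℝ) / n) * ((codesF n L).card : ℝ) * n ≤
        ((prF n L).card : ℝ) * n := by
      rw [h1]
      nlinarith [hkey]
    exact le_of_mul_le_mul_right h2 hn0'
  have step2 : ((prF n L).card : ℝ) / ((codesF n L).card : ℝ) ≤
      ((prF n L).card : ℝ) / ((UD n L).ncard : ℝ) :=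
    div_le_div_of_nonneg_left hA0 hU0' hUN'
  rw [rho, hA]
  exact le_trans step1 step2

theorem xi_mem_and_bounds {n m : ℕ} (hm : 1 ≤ m) (hmn : m ≤ n) (hn : 1 ≤ n) :
    1 - (m * m : ℝ) / n ≤ xi n m ∧ xi n m ≤ 1 := by
  -- witness: all lengths 1
  set L : Fin m → ℕ := fun _ => 1 with hLdef
  have hL : ∀ i, 1 ≤ L i := fun _ => le_refl 1
  have hUD : (UD n L).Nonempty := by
    refine ⟨fun i => [Fin.castLE hmn i], ?_, ?_⟩
    · intro i; rfl
    · apply isUD_of_isPrefix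
      refine ⟨?_, ?_, ?_⟩
      · intro i j hij
        have h' : Fin.castLE hmn i = Fin.castLE hmn j := by simpa using hij
        exact Fin.castLE_injective hmn h'
      · intro i; simp
      · intro i j hij hpre
        have : ([Fin.castLE hmn i] : List (Fin n)) = [Fin.castLE hmn j] :=
          hpre.eq_of_length (by simp)
        apply hij
        apply Fin.castLE_injective hmn
        simpa using this
  have hmem : rho n L ∈ {r : ℝ | ∃ L : Fin m → ℕ, (∀ i, 1 ≤ L i) ∧ (UD n L).Nonempty ∧ r = rho n L} :=
    ⟨L, hL, hUD, rfl⟩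
  have hbdd : ∀ r ∈ {r : ℝ | ∃ L : Fin m → ℕ, (∀ i, 1 ≤ L i) ∧ (UD n L).Nonempty ∧ r = rho n L},
      1 - (m * m : ℝ) / n ≤ r := by
    rintro r ⟨L', hL', hUD', rfl⟩
    exact rho_lower hn hL' hUD'
  constructor
  · exact le_csInf ⟨_, hmem⟩ hbdd
  · exact csInf_le_of_le ⟨_, hbdd⟩ hmem (rho_le_one hUD)

end Aux

/-- Corollary 1: for every fixed `m ≥ 1`, `ξ_{n,m} → 1` as `n → ∞`. -/
theorem stmt4 (m : ℕ) (hm : 1 ≤ m) :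
    Filter.Tendsto (fun n : ℕ => xi n m) Filter.atTop (𝓝 1) := by
  have hlow : Filter.Tendsto (fun n : ℕ => 1 - (m * m : ℝ) / n) Filter.atTop (𝓝 1) := by
    have h0 := tendsto_const_div_atTop_nhds_zero_nat ((m : ℝ) * m)
    have := Filter.Tendsto.sub (tendsto_const_nhds (x := (1 : ℝ))) h0
    simpa using this
  refine tendsto_of_tendsto_of_tendsto_of_le_of_le' hlow tendsto_const_nhds ?_ ?_
  · filter_upwards [Filter.eventually_ge_atTop m] with n hn
    exact (xi_mem_and_bounds hm hn (le_trans hm hn)).1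
  · filter_upwards [Filter.eventually_ge_atTop m] with n hn
    exact (xi_mem_and_bounds hm hn (le_trans hm hn)).2
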